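/- Let A be an N×N matrix with det(I - A·z) = d_0 + ... + d_{N-r} z^{N-r} of degree N-r (d_{N-r} ≠ 0) and sum(adj(I - A·z)) = k_0 + ... + k_{N-1-s} z^{N-1-s} of degree N-1-s with s = r. Then the value of the rational function sum(adj(A - I·z))/det(A - I·z) at z = 0 equals -k_{N-1-s}/d_{N-r}. -/
import Mathlib

open Polynomial Matrix

/-- The sum of all the entries of a matrix. -/
def sumEntries {R : Type*} [AddCommMonoid R] {N : ℕ} (M : Matrix (Fin N) (Fin N) R) : R :=
  ∑ i, ∑ j, M i j

/-- `det(I - A·z)`. -/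
noncomputable def detIsubAz {N : ℕ} (A : Matrix (Fin N) (Fin N) ℚ) : ℚ[X] :=
  ((1 : Matrix (Fin N) (Fin N) ℚ[X]) - (X : ℚ[X]) • A.map C).det

/-- `det(A - I·z)`. -/
noncomputable def detAsubIz {N : ℕ} (A : Matrix (Fin N) (Fin N) ℚ) : ℚ[X] :=
  (A.map C - (X : ℚ[X]) • (1 : Matrix (Fin N) (Fin N) ℚ[X])).det

/-- `sum(adj(I - A·z))`. -/
noncomputable def sumAdjIsubAz {N : ℕ} (A : Matrix (Fin N) (Fin N) ℚ) : ℚ[X] :=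
  sumEntries (adjugate ((1 : Matrix (Fin N) (Fin N) ℚ[X]) - (X : ℚ[X]) • A.map C))

/-- `sum(adj(A - I·z))`. -/
noncomputable def sumAdjAsubIz {N : ℕ} (A : Matrix (Fin N) (Fin N) ℚ) : ℚ[X] :=
  sumEntries (adjugate (A.map C - (X : ℚ[X]) • (1 : Matrix (Fin N) (Fin N) ℚ[X])))

noncomputable section Stmt6Aux
set_option synthInstance.maxHeartbeats 1000000

namespace Stmt6Aux

abbrev F := RatFunc ℚ

def t : F := algebraMap ℚ[X] F X

lemma t_ne : t ≠ 0 := by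
  simp only [t, ne_eq, map_eq_zero_iff _ (RatFunc.algebraMap_injective ℚ)]
  exact X_ne_zero

/-- Evaluation at `1/X`. -/
def ψ : ℚ[X] →+* F := eval₂RingHom (algebraMap ℚ F) t⁻¹

lemma phi_eq (q : ℚ[X]) : algebraMap ℚ[X] F q = eval₂ (algebraMap ℚ F) t q := by
  have h1 : algebraMap ℚ[X] F q = (IsScalarTower.toAlgHom ℚ ℚ[X] F) q := rfl
  conv_lhs => rw [h1, ← aeval_X_left_apply q, ← aeval_algHom_apply]
  rw [aeval_def]
  rfl

lemma reflect_key (n : ℕ) (p : ℚ[X]) (h : p.natDegree ≤ n) :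
    algebraMap ℚ[X] F (p.reflect n) = t ^ n * ψ p := by
  have : Invertible (t⁻¹) := invertibleOfNonzero (inv_ne_zero t_ne)
  have h2 : ⅟(t⁻¹) = t := by rw [invOf_eq_inv, inv_inv]
  have h3 := eval₂_reflect_mul_pow (algebraMap ℚ F) (t⁻¹) n p h
  rw [h2] at h3
  rw [phi_eq]
  show _ = t ^ n * eval₂ (algebraMap ℚ F) t⁻¹ p
  rw [← h3, inv_pow, mul_comm, mul_assoc, inv_mul_cancel₀ (pow_ne_zero n t_ne), mul_one]

variable {N : ℕ} (A : Matrix (Fin N) (Fin N) ℚ)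

lemma map2 : (A.map C - (X : ℚ[X]) • (1 : Matrix (Fin N) (Fin N) ℚ[X])).map (algebraMap ℚ[X] F)
    = (-t) • ((1 : Matrix (Fin N) (Fin N) F) - t⁻¹ • A.map (algebraMap ℚ F)) := by
  ext i j
  simp only [Matrix.map_apply, Matrix.sub_apply, Matrix.smul_apply, Matrix.one_apply,
    smul_eq_mul, map_sub, _root_.map_mul, phi_eq, eval₂_C, eval₂_X, eval₂_sub, eval₂_mul]
  by_cases hij : i = j <;> simp [hij] <;> field_simp [t_ne] <;> ring

lemma map1 : ((1 : Matrix (Fin N) (Fin N) ℚ[X]) - (X : ℚ[X]) • A.map C).map ψ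
    = (1 : Matrix (Fin N) (Fin N) F) - t⁻¹ • A.map (algebraMap ℚ F) := by
  ext i j
  simp only [ψ, Matrix.map_apply, Matrix.sub_apply, Matrix.smul_apply, Matrix.one_apply,
    smul_eq_mul, coe_eval₂RingHom, eval₂_sub, eval₂_mul, eval₂_X, eval₂_C]
  by_cases hij : i = j <;> simp [hij]

lemma detA_key : algebraMap ℚ[X] F (detAsubIz A) = (-t) ^ N * ψ (detIsubAz A) := by
  rw [detAsubIz, detIsubAz, RingHom.map_det, RingHom.map_det, RingHom.mapMatrix_apply,
    RingHom.mapMatrix_apply, map2, map1, det_smul, Fintype.card_fin]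

lemma adjA_key : algebraMap ℚ[X] F (sumAdjAsubIz A) = (-t) ^ (N - 1) * ψ (sumAdjIsubAz A) := by
  have h2 : (adjugate (A.map C - (X : ℚ[X]) • (1 : Matrix (Fin N) (Fin N) ℚ[X]))).map
      (algebraMap ℚ[X] F)
      = (-t) ^ (N - 1) • (adjugate ((1 : Matrix (Fin N) (Fin N) ℚ[X])
          - (X : ℚ[X]) • A.map C)).map ψ := by
    have ha := RingHom.map_adjugate (algebraMap ℚ[X] F)
      (A.map C - (X : ℚ[X]) • (1 : Matrix (Fin N) (Fin N) ℚ[X]))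
    have hb := RingHom.map_adjugate ψ
      ((1 : Matrix (Fin N) (Fin N) ℚ[X]) - (X : ℚ[X]) • A.map C)
    rw [RingHom.mapMatrix_apply, RingHom.mapMatrix_apply] at ha hb
    rw [ha, hb, map2, map1, adjugate_smul, Fintype.card_fin]
  simp only [sumAdjAsubIz, sumAdjIsubAz, sumEntries, map_sum, Finset.mul_sum]
  refine Finset.sum_congr rfl fun i _ => Finset.sum_congr rfl fun j _ => ?_
  have := congrFun (congrFun h2 i) j
  simp only [Matrix.map_apply, Matrix.smul_apply, smul_eq_mul] at this
  rw [this]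

end Stmt6Aux

end Stmt6Aux

open Stmt6Aux in
/-- If `det(I - A·z)` has degree `N - r` and `sum(adj(I - A·z))` has degree `N - 1 - s` with
`s = r`, then the value of `sum(adj(A - I·z))/det(A - I·z)` at `z = 0` equals
`- k_{N-1-s} / d_{N-r}`. -/
theorem stmt6 {N : ℕ} (A : Matrix (Fin N) (Fin N) ℚ) (r s : ℕ)
    (hr : r ≤ N) (hN : 1 ≤ N) (hs : s ≤ N - 1) (hsr : s = r)
    (hdet : (detIsubAz A).natDegree = N - r)
    (hadj : (sumAdjIsubAz A).natDegree = N - 1 - s) (hadj0 : sumAdjIsubAz A ≠ 0) :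
    RatFunc.eval (RingHom.id ℚ) 0 (RatFunc.mk (sumAdjAsubIz A) (detAsubIz A))
      = - (sumAdjIsubAz A).coeff (N - 1 - s) / (detIsubAz A).coeff (N - r) := by
  set d := detIsubAz A with hd
  set k := sumAdjIsubAz A with hk
  have hinj := RatFunc.algebraMap_injective ℚ
  -- d is nonzero
  have hd1 : d.eval 0 = 1 := by
    have hmap : ((1 : Matrix (Fin N) (Fin N) ℚ[X]) - (X : ℚ[X]) • A.map C).map
        (evalRingHom (0 : ℚ)) = 1 := by
      ext i j
      by_cases hij : i = j <;>
        simp [Matrix.map_apply, Matrix.sub_apply, Matrix.smul_apply, Matrix.one_apply, hij]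
    have := RingHom.map_det (evalRingHom (0 : ℚ))
      ((1 : Matrix (Fin N) (Fin N) ℚ[X]) - (X : ℚ[X]) • A.map C)
    rw [RingHom.mapMatrix_apply, hmap, det_one] at this
    simpa [hd, detIsubAz] using this
  have hd0 : d ≠ 0 := fun h => by simp [h] at hd1
  -- key polynomial identities
  have hdegd : d.natDegree ≤ N := hdet ▸ Nat.sub_le N r
  have hdegk : k.natDegree ≤ N - 1 := hadj ▸ Nat.sub_le (N - 1) s
  have hbid : detAsubIz A = (-1 : ℚ[X]) ^ N * (X ^ r * d.reverse) := by
    apply hinj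
    rw [detA_key, ← hd]
    have hrev : d.reverse = d.reflect (N - r) := by rw [Polynomial.reverse, hdet]
    rw [_root_.map_mul, _root_.map_mul, map_pow, map_neg, _root_.map_one, hrev,
      reflect_key (N - r) d (le_of_eq hdet), neg_pow]
    have hX : algebraMap ℚ[X] F (X ^ r) = t ^ r := by rw [map_pow]; rfl
    have hpow : (t : F) ^ N = t ^ r * t ^ (N - r) := by rw [← pow_add, Nat.add_sub_cancel' hr]
    rw [hX, hpow]
    ring
  have haid : sumAdjAsubIz A = (-1 : ℚ[X]) ^ (N - 1) * (X ^ s * k.reverse) := by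
    apply hinj
    rw [adjA_key, ← hk]
    have hrev : k.reverse = k.reflect (N - 1 - s) := by rw [Polynomial.reverse, hadj]
    rw [_root_.map_mul, _root_.map_mul, map_pow, map_neg, _root_.map_one, hrev,
      reflect_key (N - 1 - s) k (le_of_eq hadj), neg_pow]
    have hX : algebraMap ℚ[X] F (X ^ s) = t ^ s := by rw [map_pow]; rfl
    have hpow : (t : F) ^ (N - 1) = t ^ s * t ^ (N - 1 - s) := by
      rw [← pow_add, Nat.add_sub_cancel' hs]
    rw [hX, hpow]
    ring
  -- nonvanishing facts
  have hDrev0 : d.reverse.eval 0 ≠ 0 := by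
    rw [← coeff_zero_eq_eval_zero, coeff_zero_reverse]
    exact leadingCoeff_ne_zero.mpr hd0
  have hDrev : d.reverse ≠ 0 := fun h => hDrev0 (by simp [h])
  have hφD : algebraMap ℚ[X] F d.reverse ≠ 0 := fun h =>
    hDrev (hinj (by simpa using h))
  -- rewrite the rational function
  have hmk : RatFunc.mk (sumAdjAsubIz A) (detAsubIz A)
      = algebraMap ℚ[X] F (-(k.reverse)) / algebraMap ℚ[X] F d.reverse := by
    rw [RatFunc.mk_eq_div, hbid, haid, hsr]
    have hb0 : algebraMap ℚ[X] F ((-1 : ℚ[X]) ^ N * (X ^ r * d.reverse)) ≠ 0 := by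
      simp only [ne_eq, map_eq_zero_iff _ hinj, mul_eq_zero, pow_eq_zero_iff', X_ne_zero,
        neg_eq_zero, one_ne_zero, false_and, false_or]
      exact fun h => hDrev (by tauto)
    rw [div_eq_div_iff hb0 hφD]
    rw [← _root_.map_mul, ← _root_.map_mul]
    congr 1
    have hsign : ((-1 : ℚ[X])) ^ N = (-1) ^ (N - 1) * (-1) := by
      conv_lhs => rw [← Nat.succ_pred_eq_of_pos hN]
      rw [pow_succ, Nat.pred_eq_sub_one]
    rw [hsign]
    ring
  rw [hmk]
  -- evaluate
  set x : F := algebraMap ℚ[X] F (-(k.reverse)) / algebraMap ℚ[X] F d.reverse with hx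
  have hdenom : (RatFunc.denom x).eval 0 ≠ 0 := by
    obtain ⟨c, hc⟩ := RatFunc.denom_div_dvd (-(k.reverse)) d.reverse
    intro h0
    apply hDrev0
    rw [hc, eval_mul, h0, zero_mul]
  have heval2 : ∀ p : ℚ[X], Polynomial.eval₂ (RingHom.id ℚ) 0 p = p.eval 0 := fun p => rfl
  have hxmul : x * algebraMap ℚ[X] F d.reverse = algebraMap ℚ[X] F (-(k.reverse)) :=
    div_mul_cancel₀ _ hφD
  have hevmul := RatFunc.eval_mul (f := RingHom.id ℚ) (a := (0 : ℚ))
    (x := x) (y := algebraMap ℚ[X] F d.reverse) (by rw [heval2]; exact hdenom)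
    (by rw [RatFunc.denom_algebraMap, heval2]; simp)
  rw [hxmul] at hevmul
  have hev_d : RatFunc.eval (RingHom.id ℚ) 0 (algebraMap ℚ[X] F d.reverse) = d.reverse.eval 0 := by
    rw [RatFunc.eval_algebraMap]
    simp [heval2]
  have hev_k : RatFunc.eval (RingHom.id ℚ) 0 (algebraMap ℚ[X] F (-(k.reverse)))
      = -(k.reverse.eval 0) := by
    rw [RatFunc.eval_algebraMap]
    simp [heval2]
  rw [hev_d, hev_k] at hevmul
  have : RatFunc.eval (RingHom.id ℚ) 0 x = -(k.reverse.eval 0) / d.reverse.eval 0 :=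
    eq_div_of_mul_eq hDrev0 hevmul.symm
  rw [this, ← coeff_zero_eq_eval_zero, ← coeff_zero_eq_eval_zero, coeff_zero_reverse,
    coeff_zero_reverse, Polynomial.leadingCoeff, Polynomial.leadingCoeff, hdet, hadj]
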